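/- arXiv:2603.09628 — 3 statements merged into one kernel-verified Lean document; each statement's English description precedes it below -/
import Mathlib

section
/- Let W be a matrix A_p weight on R^d (with 1<p<∞) and A any constant invertible n×n matrix. Then the matrix function 𝒲(x) = (A* W(x)^{2/p} A)^{p/2} is also a matrix A_p weight and [𝒲]_{A_p} = [W]_{A_p}. -/
open MeasureTheory Matrix
open scoped ENNReal ComplexOrder

/-- Operator norm of a matrix acting on Euclidean space. -/
noncomputable def opN {n : ℕ} (A : Matrix (Fin n) (Fin n) ℂ) : ℝ :=
  ‖Matrix.toEuclideanCLM (𝕜 := ℂ) A‖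

/-- Real power of a (Hermitian) matrix, via the continuous functional calculus. -/
noncomputable def mpow {n : ℕ} (A : Matrix (Fin n) (Fin n) ℂ) (r : ℝ) :
    Matrix (Fin n) (Fin n) ℂ :=
  cfc (fun t : ℝ => t ^ r) A

/-- The axis-parallel cube with corner `a` and side length `h`. -/
def cube {d : ℕ} (a : Fin d → ℝ) (h : ℝ) : Set (Fin d → ℝ) :=
  Set.univ.pi fun i => Set.Icc (a i) (a i + h)

/-- The (two-weight) matrix `A_p` characteristic
`[U,V]_{A_p} = sup_Q ⨍_Q (⨍_Q ‖U^{1/p}(x) V^{-1/p}(y)‖^{p'} dy)^{p/p'} dx`;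
with `U = V` it is the usual matrix `A_p` characteristic `[U]_{A_p}`. -/
noncomputable def ap2Const (d n : ℕ) (p : ℝ)
    (U V : (Fin d → ℝ) → Matrix (Fin n) (Fin n) ℂ) : ℝ≥0∞ :=
  ⨆ (a : Fin d → ℝ) (h : ℝ) (_ : 0 < h),
    ENNReal.ofReal (⨍ x in cube a h,
      (⨍ y in cube a h,
        opN (mpow (U x) (1 / p) * mpow (V y) (-(1 / p))) ^ (p / (p - 1))) ^
          (p / (p / (p - 1))))

section Helpers

variable {n : ℕ} {P A B C M N Bh Ch A' X Y : Matrix (Fin n) (Fin n) ℂ}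

lemma spec_pos (hP : P.PosDef) : ∀ t ∈ spectrum ℝ P, (0:ℝ) < t := by
  rw [Matrix.IsHermitian.spectrum_real_eq_range_eigenvalues hP.isHermitian]
  rintro t ⟨i, rfl⟩
  exact hP.eigenvalues_pos i

lemma contOn {s : Set ℝ} (h : ∀ t ∈ s, (0:ℝ) < t) (r : ℝ) :
    ContinuousOn (fun t : ℝ => t ^ r) s := fun t ht =>
  (Real.continuousAt_rpow_const t r (Or.inl (h t ht).ne')).continuousWithinAt

lemma sa (hP : P.PosDef) : _root_.IsSelfAdjoint P := hP.isHermitian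

lemma mpow_sa (r : ℝ) : _root_.IsSelfAdjoint (mpow P r) := cfc_predicate _ _

lemma mpow_herm (r : ℝ) : (mpow P r).IsHermitian := mpow_sa r

lemma mpow_hermEq (r : ℝ) : (mpow P r)ᴴ = mpow P r := mpow_herm r

lemma mpow_one' (h : _root_.IsSelfAdjoint P) : mpow P 1 = P := by
  rw [mpow, cfc_congr (g := fun t : ℝ => t) (fun t _ => Real.rpow_one t), cfc_id' ℝ P]

lemma mpow_add (hP : P.PosDef) (r s : ℝ) : mpow P (r + s) = mpow P r * mpow P s := by
  rw [mpow, cfc_congr (g := fun t : ℝ => t ^ r * t ^ s)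
    (fun t ht => (Real.rpow_add (spec_pos hP t ht) r s)),
    cfc_mul _ _ P (contOn (spec_pos hP) r) (contOn (spec_pos hP) s)]
  rfl

lemma mpow_zero' (hP : P.PosDef) : mpow P 0 = 1 := by
  rw [mpow, cfc_congr (g := fun _ : ℝ => 1) (fun t _ => Real.rpow_zero t)]
  exact cfc_const_one ℝ P (sa hP)

lemma mpow_mul_mpow_neg (hP : P.PosDef) (r : ℝ) : mpow P r * mpow P (-r) = 1 := by
  rw [← mpow_add hP, add_neg_cancel, mpow_zero' hP]

lemma mpow_neg_mul_mpow (hP : P.PosDef) (r : ℝ) : mpow P (-r) * mpow P r = 1 := by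
  rw [← mpow_add hP, neg_add_cancel, mpow_zero' hP]

lemma mpow_isUnit (hP : P.PosDef) (r : ℝ) : IsUnit (mpow P r) :=
  ⟨⟨mpow P r, mpow P (-r), mpow_mul_mpow_neg hP r, mpow_neg_mul_mpow hP r⟩, rfl⟩

lemma mpow_neg_one (hP : P.PosDef) : mpow P (-1) = P⁻¹ := by
  have h := mpow_mul_mpow_neg hP 1
  rw [mpow_one' (sa hP)] at h
  exact (Matrix.inv_eq_right_inv h).symm

lemma mpow_mpow (hP : P.PosDef) (r s : ℝ) : mpow (mpow P r) s = mpow P (r * s) := by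
  have h1 := contOn (spec_pos hP) r
  rw [mpow, mpow, ← cfc_comp (fun t : ℝ => t ^ s) (fun t : ℝ => t ^ r) P (sa hP)
      (by
        refine contOn ?_ s
        rintro t ⟨u, hu, rfl⟩
        exact Real.rpow_pos_of_pos (spec_pos hP u hu) r) h1,
    mpow, cfc_congr (fun t ht => ?_)]
  exact (Real.rpow_mul (spec_pos hP t ht).le r s).symm

lemma conj_posdef (hB : B.PosDef) (hA : IsUnit A) : (Aᴴ * B * A).PosDef := by
  refine Matrix.PosDef.of_dotProduct_mulVec_pos (Matrix.isHermitian_conjTranspose_mul_mul A hB.1) fun x hx => ?_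
  have hx' : A *ᵥ x ≠ 0 :=
    (Matrix.mulVec_injective_iff_isUnit.mpr hA).ne_iff' (Matrix.mulVec_zero A) |>.2 hx
  simpa only [star_mulVec, dotProduct_mulVec, vecMul_vecMul] using hB.dotProduct_mulVec_pos hx'

lemma mpow_posdef (hP : P.PosDef) (r : ℝ) : (mpow P r).PosDef := by
  have h := conj_posdef Matrix.PosDef.one (mpow_isUnit hP (r/2))
  rw [Matrix.mul_one, mpow_hermEq, ← mpow_add hP] at h
  norm_num at h
  exact h

lemma opN_nonneg : 0 ≤ opN X := norm_nonneg _

lemma opN_mul_self : opN (Xᴴ * X) = opN X ^ 2 := by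
  rw [opN, opN, _root_.map_mul, ← Matrix.star_eq_conjTranspose, map_star,
    ContinuousLinearMap.star_eq_adjoint, pow_two]
  exact ContinuousLinearMap.norm_adjoint_comp_self _

lemma opN_conjTranspose : opN Xᴴ = opN X := by
  rw [opN, opN, ← Matrix.star_eq_conjTranspose, map_star,
    ContinuousLinearMap.star_eq_adjoint]
  exact LinearIsometryEquiv.norm_map _ _

lemma opN_self_mul : opN (X * Xᴴ) = opN X ^ 2 := by
  have h := opN_mul_self (X := Xᴴ)
  rwa [Matrix.conjTranspose_conjTranspose, opN_conjTranspose] at h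

lemma key_abstract (hM : Mᴴ = M) (hN : Nᴴ = N) (hBh : Bhᴴ = Bh) (hCh : Chᴴ = Ch)
    (hMM : M * M = A'ᴴ * (Bh * Bh) * A') (hNN : A' * (N * N) * A'ᴴ = Ch * Ch) :
    opN (M * N) = opN (Bh * Ch) := by
  have e1 : opN (M * N) ^ 2 = opN ((Bh * A' * N)ᴴ * (Bh * A' * N)) := by
    rw [← opN_mul_self (X := M * N)]
    congr 1
    rw [Matrix.conjTranspose_mul, hN, hM, Matrix.conjTranspose_mul,
      Matrix.conjTranspose_mul, hBh, hN]
    have h1 : M * (M * N) = A'ᴴ * (Bh * (Bh * (A' * N))) := by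
      rw [← Matrix.mul_assoc, hMM]; simp only [Matrix.mul_assoc]
    simp only [Matrix.mul_assoc, h1]
  have e2 : opN (Bh * A' * N) ^ 2 = opN (Bh * Ch) ^ 2 := by
    rw [← opN_self_mul (X := Bh * A' * N), ← opN_self_mul (X := Bh * Ch)]
    congr 1
    rw [Matrix.conjTranspose_mul, Matrix.conjTranspose_mul, Matrix.conjTranspose_mul,
      hBh, hN, hCh]
    have h2 := congrArg (fun Z => Z * Bh) hNN
    simp only [Matrix.mul_assoc] at h2
    simp only [Matrix.mul_assoc, h2]
  have e3 : opN (M * N) ^ 2 = opN (Bh * Ch) ^ 2 := by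
    rw [e1, opN_mul_self, e2]
  have := congrArg Real.sqrt e3
  rwa [Real.sqrt_sq opN_nonneg, Real.sqrt_sq opN_nonneg] at this

lemma key (hB : B.PosDef) (hC : C.PosDef) (hA : IsUnit A) :
    opN (mpow (Aᴴ * B * A) (1/2) * mpow (Aᴴ * C * A) (-(1/2))) =
      opN (mpow B (1/2) * mpow C (-(1/2))) := by
  have hT := conj_posdef hB hA
  have hS := conj_posdef hC hA
  have hAdet : IsUnit A.det := (Matrix.isUnit_iff_isUnit_det A).mp hA
  have hAHdet : IsUnit Aᴴ.det := by
    rw [Matrix.det_conjTranspose]; exact hAdet.star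
  refine key_abstract (A' := A) (mpow_hermEq _) (mpow_hermEq _) (mpow_hermEq _) (mpow_hermEq _) ?_ ?_
  · have h1 : mpow B (1/2) * mpow B (1/2) = B := by
      rw [← mpow_add hB]; norm_num; exact mpow_one' (sa hB)
    have h2 : mpow (Aᴴ * B * A) (1/2) * mpow (Aᴴ * B * A) (1/2) = Aᴴ * B * A := by
      rw [← mpow_add hT]; norm_num; exact mpow_one' (sa hT)
    rw [h1, h2]
  · have h1 : mpow C (-(1/2)) * mpow C (-(1/2)) = C⁻¹ := by
      rw [← mpow_add hC]; norm_num; exact mpow_neg_one hC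
    have h2 : mpow (Aᴴ * C * A) (-(1/2)) * mpow (Aᴴ * C * A) (-(1/2)) = (Aᴴ * C * A)⁻¹ := by
      rw [← mpow_add hS]; norm_num; exact mpow_neg_one hS
    rw [h1, h2, Matrix.mul_inv_rev, Matrix.mul_inv_rev, ← Matrix.mul_assoc,
      ← Matrix.mul_assoc, Matrix.mul_nonsing_inv A hAdet, Matrix.one_mul,
      Matrix.mul_assoc, Matrix.nonsing_inv_mul Aᴴ hAHdet, Matrix.mul_one]

lemma pointwise {p : ℝ} (hp : 1 < p) (hA : IsUnit A)
    {Wx Wy : Matrix (Fin n) (Fin n) ℂ} (hWx : Wx.PosDef) (hWy : Wy.PosDef) :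
    opN (mpow (mpow (Aᴴ * mpow Wx (2 / p) * A) (p / 2)) (1 / p) *
        mpow (mpow (Aᴴ * mpow Wy (2 / p) * A) (p / 2)) (-(1 / p))) =
      opN (mpow Wx (1 / p) * mpow Wy (-(1 / p))) := by
  have hp0 : p ≠ 0 := by positivity
  have hB : (mpow Wx (2 / p)).PosDef := mpow_posdef hWx _
  have hC : (mpow Wy (2 / p)).PosDef := mpow_posdef hWy _
  have hT := conj_posdef hB hA
  have hS := conj_posdef hC hA
  have e1 : mpow (mpow (Aᴴ * mpow Wx (2 / p) * A) (p / 2)) (1 / p) =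
      mpow (Aᴴ * mpow Wx (2 / p) * A) (1/2) := by
    have harith : (p/2) * (1/p) = 1/2 := by field_simp
    rw [mpow_mpow hT, harith]
  have e2 : mpow (mpow (Aᴴ * mpow Wy (2 / p) * A) (p / 2)) (-(1 / p)) =
      mpow (Aᴴ * mpow Wy (2 / p) * A) (-(1/2)) := by
    have harith : (p/2) * (-(1/p)) = -(1/2) := by field_simp
    rw [mpow_mpow hS, harith]
  have e3 : mpow Wx (1 / p) = mpow (mpow Wx (2 / p)) (1/2) := by
    have harith : (2/p) * (1/2) = 1/p := by field_simp
    rw [mpow_mpow hWx, harith]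
  have e4 : mpow Wy (-(1 / p)) = mpow (mpow Wy (2 / p)) (-(1/2)) := by
    have harith : (2/p) * (-(1/2)) = -(1/p) := by field_simp
    rw [mpow_mpow hWy, harith]
  rw [e1, e2, e3, e4]
  exact key hB hC hA

end Helpers

set_option maxHeartbeats 2000000 in
/-- If `W` is a matrix `A_p` weight on `ℝ^d` (`1 < p < ∞`) and `A` is a
constant invertible matrix, then `𝒲(x) = (Aᴴ W(x)^{2/p} A)^{p/2}` is also a matrix `A_p`
weight and `[𝒲]_{A_p} = [W]_{A_p}`. -/
theorem apConst_congr_invariant {d n : ℕ} {p : ℝ} (hp : 1 < p)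
    (W : (Fin d → ℝ) → Matrix (Fin n) (Fin n) ℂ)
    (hW : ∀ᵐ x ∂(volume : Measure (Fin d → ℝ)), (W x).PosDef)
    (hWAp : ap2Const d n p W W < ⊤)
    (A : Matrix (Fin n) (Fin n) ℂ) (hA : IsUnit A) :
    (∀ᵐ x ∂(volume : Measure (Fin d → ℝ)),
        (mpow (Aᴴ * mpow (W x) (2 / p) * A) (p / 2)).PosDef) ∧
      ap2Const d n p (fun x => mpow (Aᴴ * mpow (W x) (2 / p) * A) (p / 2))
          (fun x => mpow (Aᴴ * mpow (W x) (2 / p) * A) (p / 2)) =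
        ap2Const d n p W W := by
  constructor
  · exact hW.mono fun x hx => mpow_posdef (conj_posdef (mpow_posdef hx _) hA) _
  · have main : ∀ (a : Fin d → ℝ) (h : ℝ),
        (⨍ x in cube a h, (⨍ y in cube a h,
          opN (mpow (mpow (Aᴴ * mpow (W x) (2 / p) * A) (p / 2)) (1 / p) *
            mpow (mpow (Aᴴ * mpow (W y) (2 / p) * A) (p / 2)) (-(1 / p))) ^ (p / (p - 1))) ^
              (p / (p / (p - 1))))
        = ⨍ x in cube a h, (⨍ y in cube a h,
          opN (mpow (W x) (1 / p) * mpow (W y) (-(1 / p))) ^ (p / (p - 1))) ^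
            (p / (p / (p - 1))) := by
      intro a h
      have hW' : ∀ᵐ x ∂((volume : Measure (Fin d → ℝ)).restrict (cube a h)), (W x).PosDef :=
        ae_restrict_of_ae hW
      refine average_congr (hW'.mono fun x hx => ?_)
      have hinner : (⨍ y in cube a h,
          opN (mpow (mpow (Aᴴ * mpow (W x) (2 / p) * A) (p / 2)) (1 / p) *
            mpow (mpow (Aᴴ * mpow (W y) (2 / p) * A) (p / 2)) (-(1 / p))) ^ (p / (p - 1)))
          = ⨍ y in cube a h,
          opN (mpow (W x) (1 / p) * mpow (W y) (-(1 / p))) ^ (p / (p - 1)) :=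
        average_congr (hW'.mono fun y hy => by dsimp only; rw [pointwise hp hA hx hy])
      dsimp only
      rw [hinner]
    unfold ap2Const
    exact iSup_congr fun a => iSup_congr fun h => iSup_congr fun _ => by rw [main a h]
end

section
/- The key step in the proof that 𝒲 = (A* W^{2/p} A)^{p/2} has the same A_p characteristic as W: for a.e. x, y one has ‖𝒲^{1/p}(x) 𝒲^{-1/p}(y)‖ = ‖W^{1/p}(x) W^{-1/p}(y)‖. -/
open MeasureTheory Matrix
open scoped ENNReal ComplexOrder

namespace KeyAux

variable {n : ℕ}

/-- selfadjoint with positive real spectrum -/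
def PD (M : Matrix (Fin n) (Fin n) ℂ) : Prop :=
  IsSelfAdjoint M ∧ ∀ t ∈ spectrum ℝ M, 0 < t

lemma PD.of_posDef {M : Matrix (Fin n) (Fin n) ℂ} (h : M.PosDef) : PD M := by
  refine ⟨h.isHermitian.isSelfAdjoint, fun t ht => ?_⟩
  rw [h.isHermitian.spectrum_real_eq_range_eigenvalues] at ht
  obtain ⟨i, rfl⟩ := ht
  exact h.eigenvalues_pos i

lemma PD.contOn {M : Matrix (Fin n) (Fin n) ℂ} (h : PD M) (r : ℝ) :
    ContinuousOn (fun t : ℝ => t ^ r) (spectrum ℝ M) := fun t ht =>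
  (Real.continuousAt_rpow_const t r (Or.inl (h.2 t ht).ne')).continuousWithinAt

lemma PD.mpow_pd {M : Matrix (Fin n) (Fin n) ℂ} (h : PD M) (r : ℝ) : PD (mpow M r) := by
  refine ⟨cfc_predicate _ M, fun t ht => ?_⟩
  rw [_root_.mpow, cfc_map_spectrum _ _ h.1 (h.contOn r)] at ht
  obtain ⟨s, hs, rfl⟩ := ht
  exact Real.rpow_pos_of_pos (h.2 s hs) r

lemma PD.mpow_mul_mpow {M : Matrix (Fin n) (Fin n) ℂ} (h : PD M) (a b : ℝ) :
    mpow M a * mpow M b = mpow M (a + b) := by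
  rw [_root_.mpow, _root_.mpow, _root_.mpow, ← cfc_mul _ _ M (h.contOn a) (h.contOn b)]
  exact cfc_congr fun t ht => (Real.rpow_add (h.2 t ht) a b).symm

lemma PD.mpow_mpow {M : Matrix (Fin n) (Fin n) ℂ} (h : PD M) (a b : ℝ) :
    mpow (mpow M a) b = mpow M (a * b) := by
  have hg : ContinuousOn (fun t : ℝ => t ^ b)
      ((fun t : ℝ => t ^ a) '' spectrum ℝ M) := by
    rintro t ⟨s, hs, rfl⟩
    exact (Real.continuousAt_rpow_const _ _
      (Or.inl (Real.rpow_pos_of_pos (h.2 s hs) a).ne')).continuousWithinAt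
  rw [_root_.mpow, _root_.mpow, _root_.mpow,
    ← cfc_comp' (fun t : ℝ => t ^ b) (fun t : ℝ => t ^ a) M hg (h.contOn a) h.1]
  exact cfc_congr fun t ht => (Real.rpow_mul (h.2 t ht).le a b).symm

lemma PD.mpow_zero {M : Matrix (Fin n) (Fin n) ℂ} (h : PD M) : mpow M 0 = 1 := by
  rw [_root_.mpow, cfc_congr (g := (1 : ℝ → ℝ)) fun t _ => Real.rpow_zero t]
  exact cfc_one ℝ M h.1

lemma PD.mpow_one {M : Matrix (Fin n) (Fin n) ℂ} (h : PD M) : mpow M 1 = M := by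
  rw [_root_.mpow, cfc_congr (g := id) fun t _ => Real.rpow_one t]
  exact cfc_id ℝ M h.1

lemma posDef_conjTranspose_mul_self {S : Matrix (Fin n) (Fin n) ℂ} (hS : IsUnit S) :
    (Sᴴ * S).PosDef := by
  refine Matrix.PosDef.of_dotProduct_mulVec_pos (Matrix.isHermitian_conjTranspose_mul_self S) fun v hv => ?_
  have hv' : S *ᵥ v ≠ 0 := fun hc =>
    hv ((Matrix.mulVec_injective_iff_isUnit.mpr hS) (by simpa using hc))
  rw [← Matrix.mulVec_mulVec, Matrix.dotProduct_mulVec, Matrix.vecMul_conjTranspose,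
    star_star]
  exact Matrix.dotProduct_star_self_pos_iff.mpr hv'

lemma opN_mul_conjTranspose (M : Matrix (Fin n) (Fin n) ℂ) :
    opN (M * Mᴴ) = opN M ^ 2 := by
  unfold opN
  rw [_root_.map_mul, ← Matrix.star_eq_conjTranspose, map_star, sq]
  exact CStarRing.norm_self_mul_star (x := Matrix.toEuclideanCLM (𝕜 := ℂ) M)

lemma opN_conjTranspose_mul (M : Matrix (Fin n) (Fin n) ℂ) :
    opN (Mᴴ * M) = opN M ^ 2 := by
  unfold opN
  rw [_root_.map_mul, ← Matrix.star_eq_conjTranspose, map_star, sq]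
  exact CStarRing.norm_star_mul_self (x := Matrix.toEuclideanCLM (𝕜 := ℂ) M)

end KeyAux

/-- The key step in proving that `𝒲 = (Aᴴ W^{2/p} A)^{p/2}` has the same
`A_p` characteristic as `W`: for a.e. `x, y`,
`‖𝒲^{1/p}(x) 𝒲^{-1/p}(y)‖ = ‖W^{1/p}(x) W^{-1/p}(y)‖`. -/
theorem key_norm_identity {d n : ℕ} {p : ℝ} (hp : 1 < p)
    (W : (Fin d → ℝ) → Matrix (Fin n) (Fin n) ℂ)
    (hW : ∀ᵐ x ∂(volume : Measure (Fin d → ℝ)), (W x).PosDef)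
    (A : Matrix (Fin n) (Fin n) ℂ) (hA : IsUnit A) :
    ∀ᵐ x ∂(volume : Measure (Fin d → ℝ)), ∀ᵐ y ∂(volume : Measure (Fin d → ℝ)),
      opN (mpow (mpow (Aᴴ * mpow (W x) (2 / p) * A) (p / 2)) (1 / p) *
            mpow (mpow (Aᴴ * mpow (W y) (2 / p) * A) (p / 2)) (-(1 / p))) =
        opN (mpow (W x) (1 / p) * mpow (W y) (-(1 / p))) := by
  have hp0 : (0 : ℝ) < p := lt_trans one_pos hp
  have hpne : p ≠ 0 := ne_of_gt hp0
  -- inverse of A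
  obtain ⟨A', hAA', hA'A⟩ : ∃ B : Matrix (Fin n) (Fin n) ℂ, A * B = 1 ∧ B * A = 1 :=
    ⟨↑hA.unit⁻¹, by nth_rewrite 1 [← hA.unit_spec]; exact hA.unit.mul_inv,
      by nth_rewrite 2 [← hA.unit_spec]; exact hA.unit.inv_mul⟩
  filter_upwards [hW] with x hx
  filter_upwards [hW] with y hy
  have pdWx : KeyAux.PD (W x) := KeyAux.PD.of_posDef hx
  have pdWy : KeyAux.PD (W y) := KeyAux.PD.of_posDef hy
  set Vx := mpow (W x) (1 / p) with hVxdef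
  set Vy' := mpow (W y) (-(1 / p)) with hVy'def
  have hVx : Vxᴴ = Vx := by
    rw [← Matrix.star_eq_conjTranspose]; exact (pdWx.mpow_pd (1 / p)).1
  have hVy' : Vy'ᴴ = Vy' := by
    rw [← Matrix.star_eq_conjTranspose]; exact (pdWy.mpow_pd (-(1 / p))).1
  have hBx : mpow (W x) (2 / p) = Vx * Vx := by
    have h2p : (1 : ℝ) / p + 1 / p = 2 / p := by ring
    rw [hVxdef, pdWx.mpow_mul_mpow, h2p]
  have hBy' : mpow (W y) (-(2 / p)) = Vy' * Vy' := by
    have he : (-(1 / p) : ℝ) + -(1 / p) = -(2 / p) := by ring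
    rw [hVy'def, pdWy.mpow_mul_mpow, he]
  have hByBy' : mpow (W y) (2 / p) * mpow (W y) (-(2 / p)) = 1 := by
    rw [pdWy.mpow_mul_mpow]; simpa using pdWy.mpow_zero
  -- invertibility of Vx, Vy'
  have hVxinv : Vx * mpow (W x) (-(1 / p)) = 1 := by
    rw [hVxdef, pdWx.mpow_mul_mpow]; simpa using pdWx.mpow_zero
  have hVxinv' : mpow (W x) (-(1 / p)) * Vx = 1 := by
    rw [hVxdef, pdWx.mpow_mul_mpow]; simpa using pdWx.mpow_zero
  have hVyinv : mpow (W y) (1 / p) * Vy' = 1 := by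
    rw [hVy'def, pdWy.mpow_mul_mpow]; simpa using pdWy.mpow_zero
  have hVyinv' : Vy' * mpow (W y) (1 / p) = 1 := by
    rw [hVy'def, pdWy.mpow_mul_mpow]; simpa using pdWy.mpow_zero
  -- positive definiteness of C = Aᴴ W^{2/p} A
  have pdC : ∀ (z : Fin d → ℝ), KeyAux.PD (W z) →
      KeyAux.PD (Aᴴ * mpow (W z) (2 / p) * A) := by
    intro z hz
    set Vz := mpow (W z) (1 / p) with hVzdef
    have hVz : Vzᴴ = Vz := by
      rw [← Matrix.star_eq_conjTranspose]; exact (hz.mpow_pd (1 / p)).1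
    have hBz : mpow (W z) (2 / p) = Vz * Vz := by
      have h2p : (1 : ℝ) / p + 1 / p = 2 / p := by ring
      rw [hVzdef, hz.mpow_mul_mpow, h2p]
    have hS : IsUnit (Vz * A) := by
      refine ⟨⟨Vz * A, A' * mpow (W z) (-(1 / p)), ?_, ?_⟩, rfl⟩
      · calc Vz * A * (A' * mpow (W z) (-(1 / p)))
            = Vz * (A * A') * mpow (W z) (-(1 / p)) := by
              simp only [Matrix.mul_assoc]
          _ = 1 := by
              rw [hAA', Matrix.mul_one, hVzdef, hz.mpow_mul_mpow]
              simpa using hz.mpow_zero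
      · calc A' * mpow (W z) (-(1 / p)) * (Vz * A)
            = A' * (mpow (W z) (-(1 / p)) * Vz) * A := by
              simp only [Matrix.mul_assoc]
          _ = 1 := by
              rw [hVzdef, hz.mpow_mul_mpow]
              have : mpow (W z) (-(1 / p) + 1 / p) = 1 := by simpa using hz.mpow_zero
              rw [this, Matrix.mul_one, hA'A]
    have : Aᴴ * mpow (W z) (2 / p) * A = (Vz * A)ᴴ * (Vz * A) := by
      rw [Matrix.conjTranspose_mul, hVz, hBz]
      simp only [Matrix.mul_assoc]
    rw [this]
    exact KeyAux.PD.of_posDef (KeyAux.posDef_conjTranspose_mul_self hS)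
  have pdCx := pdC x pdWx
  have pdCy := pdC y pdWy
  set Cx := Aᴴ * mpow (W x) (2 / p) * A with hCxdef
  set Cy := Aᴴ * mpow (W y) (2 / p) * A with hCydef
  -- the two factors
  have hPf : mpow (mpow Cx (p / 2)) (1 / p) = mpow Cx (1 / 2) := by
    have he : p / 2 * (1 / p) = 1 / 2 := by field_simp
    rw [pdCx.mpow_mpow, he]
  have hQf : mpow (mpow Cy (p / 2)) (-(1 / p)) = mpow Cy (-(1 / 2)) := by
    have he : p / 2 * -(1 / p) = -(1 / 2) := by field_simp
    rw [pdCy.mpow_mpow, he]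
  set P := mpow Cx (1 / 2) with hPdef
  set Q := mpow Cy (-(1 / 2)) with hQdef
  have hP : Pᴴ = P := by
    rw [← Matrix.star_eq_conjTranspose]; exact (pdCx.mpow_pd (1 / 2)).1
  have hQ : Qᴴ = Q := by
    rw [← Matrix.star_eq_conjTranspose]; exact (pdCy.mpow_pd (-(1 / 2))).1
  have hP2 : P * P = Cx := by
    have he : (1 : ℝ) / 2 + 1 / 2 = 1 := by norm_num
    rw [hPdef, pdCx.mpow_mul_mpow, he, pdCx.mpow_one]
  have hQ2 : Q * Q = mpow Cy (-1) := by
    have he : (-(1 / 2) : ℝ) + -(1 / 2) = -1 := by norm_num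
    rw [hQdef, pdCy.mpow_mul_mpow, he]
  -- mpow Cy (-1) is the inverse of Cy
  have hCyinv : mpow Cy (-1) = A' * mpow (W y) (-(2 / p)) * A'ᴴ := by
    have hleft : mpow Cy (-1) * Cy = 1 := by
      nth_rewrite 2 [← pdCy.mpow_one]
      rw [pdCy.mpow_mul_mpow]; simpa using pdCy.mpow_zero
    have hright : Cy * (A' * mpow (W y) (-(2 / p)) * A'ᴴ) = 1 := by
      rw [hCydef]
      simp only [Matrix.mul_assoc]
      rw [← Matrix.mul_assoc A A', hAA', Matrix.one_mul,
        ← Matrix.mul_assoc (mpow (W y) (2 / p)), hByBy', Matrix.one_mul,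
        ← Matrix.conjTranspose_mul, hA'A, Matrix.conjTranspose_one]
    exact left_inv_eq_right_inv hleft hright
  -- norm chain
  set R := P * (A' * Vy') with hRdef
  have hRconj : Rᴴ = Vy' * (A'ᴴ * P) := by
    rw [hRdef]
    simp only [Matrix.conjTranspose_mul, hP, hVy', Matrix.mul_assoc]
  have step2 : (P * Q) * (P * Q)ᴴ = R * Rᴴ := by
    rw [Matrix.conjTranspose_mul, hP, hQ, hRconj, hRdef]
    calc P * Q * (Q * P) = P * ((Q * Q) * P) := by simp only [Matrix.mul_assoc]
      _ = P * (A' * (Vy' * (Vy' * (A'ᴴ * P)))) := by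
          rw [hQ2, hCyinv, hBy']; simp only [Matrix.mul_assoc]
      _ = P * (A' * Vy') * (Vy' * (A'ᴴ * P)) := by simp only [Matrix.mul_assoc]
  have step5 : Rᴴ * R = (Vx * Vy')ᴴ * (Vx * Vy') := by
    rw [hRconj, hRdef, Matrix.conjTranspose_mul, hVx, hVy']
    have hmid : A'ᴴ * (P * (P * (A' * Vy'))) = Vx * (Vx * Vy') := by
      rw [← Matrix.mul_assoc P P, hP2, hCxdef, hBx]
      calc A'ᴴ * (Aᴴ * (Vx * Vx) * A * (A' * Vy'))
          = (A'ᴴ * Aᴴ) * (Vx * (Vx * ((A * A') * Vy'))) := by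
            simp only [Matrix.mul_assoc]
        _ = Vx * (Vx * Vy') := by
            rw [hAA', ← Matrix.conjTranspose_mul, hAA', Matrix.conjTranspose_one]
            simp
    calc Vy' * (A'ᴴ * P) * (P * (A' * Vy'))
        = Vy' * (A'ᴴ * (P * (P * (A' * Vy')))) := by simp only [Matrix.mul_assoc]
      _ = Vy' * (Vx * (Vx * Vy')) := by rw [hmid]
      _ = Vy' * Vx * (Vx * Vy') := by simp only [Matrix.mul_assoc]
  have key : opN (P * Q) ^ 2 = opN (Vx * Vy') ^ 2 := by
    calc opN (P * Q) ^ 2 = opN ((P * Q) * (P * Q)ᴴ) := (KeyAux.opN_mul_conjTranspose _).symm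
      _ = opN (R * Rᴴ) := by rw [step2]
      _ = opN R ^ 2 := KeyAux.opN_mul_conjTranspose _
      _ = opN (Rᴴ * R) := (KeyAux.opN_conjTranspose_mul _).symm
      _ = opN ((Vx * Vy')ᴴ * (Vx * Vy')) := by rw [step5]
      _ = opN (Vx * Vy') ^ 2 := KeyAux.opN_conjTranspose_mul _
  have hfin : opN (P * Q) = opN (Vx * Vy') := by
    have h1 : (0 : ℝ) ≤ opN (P * Q) := norm_nonneg _
    have h2 : (0 : ℝ) ≤ opN (Vx * Vy') := norm_nonneg _
    nlinarith [key, h1, h2]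
  rw [hPf, hQf]
  exact hfin
end

section
/- Let θ be an increasingly ordered tuple of distinct natural numbers and α, β sub-tuples of θ (elements of C(θ)) with α strictly contained in the complement β^c = θ − β. Then for any matrices B_j ∈ M_n(F) indexed by the entries of θ, the alternating sum ∑_{σ: α ≤ σ ≤ β^c} (−1)^{|θ|−|α|−|β|−|σ|} B_{(σ−α)^t} B_{σ^c−β} equals the zero matrix, where for a tuple τ = (τ(1),...,τ(j)), B_τ = B_{τ(j)}···B_{τ(1)} is the product in reverse order, τ^t is τ reversed, σ^c = θ − σ, and the sum runs over all sub-tuples σ of θ with α ≤ σ ≤ β^c. -/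
open Finset

/-- For an increasingly ordered tuple (modelled by a finite set `s` of indices), the
reverse-ordered product `B⃗_s = B_{s(j)} ⋯ B_{s(1)}` (indices in decreasing order). -/
noncomputable def prodRev {n : ℕ} (B : ℕ → Matrix (Fin n) (Fin n) ℂ) (s : Finset ℕ) :
    Matrix (Fin n) (Fin n) ℂ :=
  (((s.sort (· ≤ ·)).reverse).map B).prod

/-- For a tuple `s`, the forward product `B⃗_{s^t} = B_{s(1)} ⋯ B_{s(j)}`
(indices in increasing order), i.e. the product associated to the reversed tuple. -/
noncomputable def prodFwd {n : ℕ} (B : ℕ → Matrix (Fin n) (Fin n) ℂ) (s : Finset ℕ) :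
    Matrix (Fin n) (Fin n) ℂ :=
  ((s.sort (· ≤ ·)).map B).prod


lemma sort_insert_max (s : Finset ℕ) (m : ℕ) (h : ∀ x ∈ s, x < m) :
    (insert m s).sort (· ≤ ·) = s.sort (· ≤ ·) ++ [m] := by
  have hm : m ∉ s := fun hms => lt_irrefl m (h m hms)
  refine (fun hp h1 h2 => List.Perm.eq_of_pairwise' (r := (· ≤ ·)) h1 h2 hp) ?_ ?_ ?_
  · refine ((Finset.sort_perm_toList _ _).trans ?_).trans
      (List.perm_append_singleton _ _).symm
    exact (Finset.toList_insert hm).trans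
      (List.Perm.cons _ (Finset.sort_perm_toList _ _).symm)
  · exact Finset.pairwise_sort _ _
  · rw [List.pairwise_append]
    refine ⟨Finset.pairwise_sort _ _, List.pairwise_singleton _ m, ?_⟩
    intro x hx y hy
    simp only [List.mem_singleton] at hy
    subst hy
    exact (h x ((Finset.mem_sort _).mp hx)).le

lemma prodFwd_insert_max {n : ℕ} (B : ℕ → Matrix (Fin n) (Fin n) ℂ) (s : Finset ℕ)
    (m : ℕ) (h : ∀ x ∈ s, x < m) :
    prodFwd B (insert m s) = prodFwd B s * B m := by
  rw [prodFwd, prodFwd, sort_insert_max s m h, List.map_append, List.prod_append]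
  simp

lemma prodRev_insert_max {n : ℕ} (B : ℕ → Matrix (Fin n) (Fin n) ℂ) (s : Finset ℕ)
    (m : ℕ) (h : ∀ x ∈ s, x < m) :
    prodRev B (insert m s) = B m * prodRev B s := by
  rw [prodRev, prodRev, sort_insert_max s m h, List.reverse_append]
  simp

lemma key_pair {n : ℕ} (θ α β : Finset ℕ) (m : ℕ)
    (hmθ : m ∈ θ) (hmβ : m ∉ β) (hmα : m ∉ α)
    (hmax : ∀ x ∈ (θ \ β) \ α, x ≤ m)
    (B : ℕ → Matrix (Fin n) (Fin n) ℂ)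
    (σ : Finset ℕ) (hασ : α ⊆ σ) (hσ : σ ⊆ θ \ β) (hmσ : m ∉ σ) :
    ((-1 : ℂ) ^ ((θ.card : ℤ) - α.card - β.card - σ.card)) •
        (prodFwd B (σ \ α) * prodRev B ((θ \ σ) \ β)) +
    ((-1 : ℂ) ^ ((θ.card : ℤ) - α.card - β.card - (insert m σ).card)) •
        (prodFwd B ((insert m σ) \ α) * prodRev B ((θ \ insert m σ) \ β)) = 0 := by
  have h1 : ∀ x ∈ σ \ α, x < m := by
    intro x hx
    rw [Finset.mem_sdiff] at hx
    have hxm : x ≠ m := fun h => hmσ (h ▸ hx.1)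
    exact lt_of_le_of_ne (hmax x (Finset.mem_sdiff.mpr ⟨hσ hx.1, hx.2⟩)) hxm
  have hmem : m ∈ (θ \ σ) \ β :=
    Finset.mem_sdiff.mpr ⟨Finset.mem_sdiff.mpr ⟨hmθ, hmσ⟩, hmβ⟩
  set t := ((θ \ σ) \ β).erase m with ht
  have h2 : ∀ x ∈ t, x < m := by
    intro x hx
    rw [ht, Finset.mem_erase, Finset.mem_sdiff, Finset.mem_sdiff] at hx
    have hxα : x ∉ α := fun h => hx.2.1.2 (hασ h)
    exact lt_of_le_of_ne
      (hmax x (Finset.mem_sdiff.mpr ⟨Finset.mem_sdiff.mpr ⟨hx.2.1.1, hx.2.2⟩, hxα⟩)) hx.1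
  have e1 : (insert m σ) \ α = insert m (σ \ α) := Finset.insert_sdiff_of_notMem _ hmα
  have e2 : (θ \ insert m σ) \ β = t := by
    rw [Finset.sdiff_insert, Finset.erase_sdiff_comm, ht]
  have e3 : (θ \ σ) \ β = insert m t := (Finset.insert_erase hmem).symm
  rw [e1, e2, e3, prodFwd_insert_max B _ m h1, prodRev_insert_max B _ m h2,
    Finset.card_insert_of_notMem hmσ]
  push_cast
  have e4 : ((θ.card : ℤ) - α.card - β.card - (σ.card + 1)) =
      ((θ.card : ℤ) - α.card - β.card - σ.card) - 1 := by ring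
  have e5 : (-1 : ℂ) ^ (((θ.card : ℤ) - α.card - β.card - σ.card) - 1) =
      -((-1 : ℂ) ^ ((θ.card : ℤ) - α.card - β.card - σ.card)) := by
    rw [zpow_sub₀ (by norm_num : (-1 : ℂ) ≠ 0), zpow_one, div_neg, div_one]
  rw [e4, e5, mul_assoc, ← add_smul, add_neg_cancel, zero_smul]

/-- For sub-tuples `α, β` of `θ` with `α` strictly contained in
`β^c = θ \ β`, the alternating sum
`∑_{α ≤ σ ≤ β^c} (−1)^{|θ|−|α|−|β|−|σ|} B_{(σ−α)^t} B_{σ^c−β}` vanishes. -/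
theorem alternating_sum_vanishes {n : ℕ} (θ α β : Finset ℕ)
    (hα : α ⊆ θ) (hβ : β ⊆ θ) (hstrict : α ⊂ θ \ β)
    (B : ℕ → Matrix (Fin n) (Fin n) ℂ) :
    ∑ σ ∈ θ.powerset.filter (fun σ => α ⊆ σ ∧ σ ⊆ θ \ β),
      ((-1 : ℂ) ^ ((θ.card : ℤ) - α.card - β.card - σ.card)) •
        (prodFwd B (σ \ α) * prodRev B ((θ \ σ) \ β)) = 0 := by
  classical
  obtain ⟨x, hxm, hxα⟩ := Finset.exists_of_ssubset hstrict
  have hne : ((θ \ β) \ α).Nonempty := ⟨x, Finset.mem_sdiff.mpr ⟨hxm, hxα⟩⟩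
  set m := ((θ \ β) \ α).max' hne with hm
  have hmmem : m ∈ (θ \ β) \ α := Finset.max'_mem _ hne
  have hmθ : m ∈ θ := (Finset.mem_sdiff.mp (Finset.mem_sdiff.mp hmmem).1).1
  have hmβ : m ∉ β := (Finset.mem_sdiff.mp (Finset.mem_sdiff.mp hmmem).1).2
  have hmα : m ∉ α := (Finset.mem_sdiff.mp hmmem).2
  have hmax : ∀ x ∈ (θ \ β) \ α, x ≤ m := fun x hx => Finset.le_max' _ x hx
  refine Finset.sum_involution (fun σ _ => if m ∈ σ then σ.erase m else insert m σ)
    ?_ ?_ ?_ ?_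
  · intro σ hσ
    simp only [Finset.mem_filter, Finset.mem_powerset] at hσ
    obtain ⟨hσθ, hασ, hσβ⟩ := hσ
    by_cases hmσ : m ∈ σ
    · simp only [hmσ, if_true]
      have hsub1 : α ⊆ σ.erase m := fun a ha =>
        Finset.mem_erase.mpr ⟨fun h => hmα (h ▸ ha), hασ ha⟩
      have hsub2 : σ.erase m ⊆ θ \ β := fun a ha => hσβ (Finset.erase_subset _ _ ha)
      have hkey := key_pair θ α β m hmθ hmβ hmα hmax B (σ.erase m) hsub1 hsub2
        (Finset.notMem_erase _ _)
      rw [Finset.insert_erase hmσ] at hkey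
      rw [add_comm]
      exact hkey
    · simp only [hmσ, if_false]
      exact key_pair θ α β m hmθ hmβ hmα hmax B σ hασ hσβ hmσ
  · intro σ _ _
    by_cases hmσ : m ∈ σ
    · simp only [hmσ, if_true]
      exact fun h => (Finset.erase_eq_self.mp h) hmσ
    · simp only [hmσ, if_false]
      exact fun h => hmσ (Finset.insert_eq_self.mp h)
  · intro σ hσ
    simp only [Finset.mem_filter, Finset.mem_powerset] at hσ ⊢
    obtain ⟨hσθ, hασ, hσβ⟩ := hσ
    by_cases hmσ : m ∈ σ
    · simp only [hmσ, if_true]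
      refine ⟨(Finset.erase_subset _ _).trans hσθ,
        fun a ha => Finset.mem_erase.mpr ⟨fun h => hmα (h ▸ ha), hασ ha⟩,
        fun a ha => hσβ (Finset.erase_subset _ _ ha)⟩
    · simp only [hmσ, if_false]
      exact ⟨Finset.insert_subset hmθ hσθ,
        hασ.trans (Finset.subset_insert _ _),
        Finset.insert_subset (Finset.mem_sdiff.mpr ⟨hmθ, hmβ⟩) hσβ⟩
  · intro σ _
    by_cases hmσ : m ∈ σ
    · simp only [hmσ, if_true, Finset.notMem_erase, if_false]
      exact Finset.insert_erase hmσ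
    · simp only [hmσ, if_false, Finset.mem_insert_self, if_true]
      exact Finset.erase_insert hmσ
end
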